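/- Let X = lim← X_n be the inverse limit of compact subsets X_n ⊂ ℂ with connecting maps f_n(z) = z², where X_n = closure(exp(2^{-n}Z)) for a closed set Z ⊂ ℂ with sup_{z∈Z} Re z = ζ < ∞ and inf_{z∈Z} Re z = η > -∞. If ξ ∈ X satisfies lim_{n→∞} π_n(ξ) = 1, where π_n is the n-th coordinate projection, then there exists a constant C > 0 such that |1 - π_n(ξ)| ≤ C·2^{-n} for all n. -/

import Mathlib

open Complex Filter

/-- If `ξ` belongs to the inverse limit of `X_n = closure (exp (2^{-n} Z))` under squaring
maps, where `Z` is closed with real parts bounded between `η > -∞` and `ζ < ∞`, and the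
coordinates `π_n ξ` tend to `1`, then `|1 - π_n ξ| = O(2^{-n})`. -/
theorem stmt3 (Z : Set ℂ) (hZcl : IsClosed Z) (η ζ : ℝ)
    (hη : ∀ z ∈ Z, η ≤ z.re) (hζ : ∀ z ∈ Z, z.re ≤ ζ)
    (X : Set (ℕ → ℂ))
    (hX : X = {x : ℕ → ℂ |
      (∀ n : ℕ, x n ∈ closure ((fun w : ℂ => Complex.exp ((2 : ℂ) ^ (-(n : ℤ)) * w)) '' Z)) ∧
      (∀ n : ℕ, (x (n + 1)) ^ 2 = x n)})
    (ξ : ℕ → ℂ) (hξ : ξ ∈ X)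
    (hlim : Tendsto (fun n => ξ n) atTop (nhds 1)) :
    ∃ C > 0, ∀ n : ℕ, ‖1 - ξ n‖ ≤ C * (2 : ℝ) ^ (-(n : ℤ)) := by
  rw [hX] at hξ
  obtain ⟨-, hsq⟩ := hξ
  set ε : ℕ → ℝ := fun n => ‖1 - ξ n‖ with hε
  have hεnn : ∀ n, 0 ≤ ε n := fun n => norm_nonneg _
  have hkey : ∀ n, ε (n + 1) * (2 - ε (n + 1)) ≤ ε n := by
    intro n
    have h1 : (1 : ℂ) - ξ n = (1 - ξ (n + 1)) * (1 + ξ (n + 1)) := by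
      rw [← hsq n]; ring
    have h2 : ε n = ε (n + 1) * ‖1 + ξ (n + 1)‖ := by
      simp only [hε, h1, norm_mul]
    rcases le_or_gt (2 - ε (n + 1)) 0 with h | h
    · have := mul_nonpos_of_nonneg_of_nonpos (hεnn (n + 1)) h
      exact this.trans (hεnn n)
    · rw [h2]
      have htri : 2 - ε (n + 1) ≤ ‖1 + ξ (n + 1)‖ := by
        have : ‖(2 : ℂ)‖ ≤ ‖1 - ξ (n + 1)‖ + ‖1 + ξ (n + 1)‖ := by
          have : (2 : ℂ) = (1 - ξ (n + 1)) + (1 + ξ (n + 1)) := by ring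
          rw [this]; exact norm_add_le _ _
        simp only [Complex.norm_two] at this
        simp only [hε]; linarith
      exact mul_le_mul_of_nonneg_left htri (hεnn (n + 1))
  have hε0 : Tendsto ε atTop (nhds 0) := by
    have h1 : Tendsto (fun n => (1 : ℂ) - ξ n) atTop (nhds 0) := by
      have := tendsto_const_nhds (x := (1 : ℂ)) (f := atTop).sub hlim
      simpa using this
    have := h1.norm
    simpa [hε] using this
  obtain ⟨N, hN⟩ : ∃ N, ∀ n ≥ N, ε n ≤ 1 / 4 := by
    obtain ⟨N, hN⟩ := Metric.tendsto_atTop.mp hε0 (1 / 4) (by norm_num)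
    refine ⟨N, fun n hn => ?_⟩
    have := hN n hn
    rw [Real.dist_eq, sub_zero, _root_.abs_of_nonneg (hεnn n)] at this
    linarith
  -- geometric decay
  have hgeo : ∀ k, ε (N + k) ≤ (1 / 4) * (4 / 7) ^ k := by
    intro k
    induction k with
    | zero => simpa using hN N le_rfl
    | succ k ih =>
      have hsmall : ε (N + (k + 1)) ≤ 1 / 4 := hN (N + (k + 1)) (by omega)
      have h1 := hkey (N + k)
      have h2 : N + k + 1 = N + (k + 1) := by omega
      rw [h2] at h1
      have hp : (0 : ℝ) ≤ (4 / 7 : ℝ) ^ k := by positivity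
      rw [pow_succ]
      nlinarith [hεnn (N + (k + 1))]
  -- bounded 2^k * ε (N+k)
  have hmain : ∀ k, (2 : ℝ) ^ k * ε (N + k) ≤ ε N + (1 / 17) * (1 - (32 / 49) ^ k) := by
    intro k
    induction k with
    | zero => simp
    | succ k ih =>
      have h1 := hkey (N + k)
      have h2 : N + k + 1 = N + (k + 1) := by omega
      rw [h2] at h1
      -- 2 ε(N+k+1) ≤ ε(N+k) + ε(N+k+1)^2
      have h3 : 2 * ε (N + (k + 1)) ≤ ε (N + k) + ε (N + (k + 1)) ^ 2 := by nlinarith [hεnn (N + (k + 1))]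
      have h4 : ε (N + (k + 1)) ^ 2 ≤ ((1 / 4) * (4 / 7 : ℝ) ^ (k + 1)) ^ 2 := by
        have := hgeo (k + 1)
        nlinarith [hεnn (N + (k + 1))]
      have h5 : (2 : ℝ) ^ k * ((1 / 4) * (4 / 7 : ℝ) ^ (k + 1)) ^ 2 = (1 / 49) * (32 / 49) ^ k := by
        have e1 : ((4 / 7 : ℝ) ^ (k + 1)) ^ 2 = ((16 / 49 : ℝ)) ^ (k + 1) := by
          rw [← pow_mul, mul_comm (k + 1) 2, pow_mul]; norm_num
        have e2 : (2 : ℝ) ^ k * (16 / 49 : ℝ) ^ k = (32 / 49 : ℝ) ^ k := by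
          rw [← mul_pow]; norm_num
        rw [mul_pow, e1, pow_succ (16 / 49 : ℝ) k, ← e2]; ring
      have hpk : (0 : ℝ) < (2 : ℝ) ^ k := by positivity
      have h6 : (2 : ℝ) ^ (k + 1) * ε (N + (k + 1)) ≤
          (2 : ℝ) ^ k * ε (N + k) + (1 / 49) * (32 / 49) ^ k := by
        rw [pow_succ]
        calc (2 : ℝ) ^ k * 2 * ε (N + (k + 1)) = (2 : ℝ) ^ k * (2 * ε (N + (k + 1))) := by ring
          _ ≤ (2 : ℝ) ^ k * (ε (N + k) + ε (N + (k + 1)) ^ 2) := by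
              exact mul_le_mul_of_nonneg_left h3 hpk.le
          _ ≤ (2 : ℝ) ^ k * ε (N + k) + (2 : ℝ) ^ k * ((1 / 4) * (4 / 7 : ℝ) ^ (k + 1)) ^ 2 := by
              have := mul_le_mul_of_nonneg_left h4 hpk.le
              nlinarith
          _ = (2 : ℝ) ^ k * ε (N + k) + (1 / 49) * (32 / 49) ^ k := by rw [h5]
      have h7 : (1 / 17 : ℝ) * (1 - (32 / 49) ^ (k + 1)) =
          (1 / 17) * (1 - (32 / 49) ^ k) + (1 / 49) * (32 / 49) ^ k := by
        rw [pow_succ]; ring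
      linarith
  have hmain' : ∀ k, (2 : ℝ) ^ k * ε (N + k) ≤ ε N + 1 / 17 := by
    intro k
    have h1 := hmain k
    have h2 : (0 : ℝ) ≤ (32 / 49 : ℝ) ^ k := by positivity
    nlinarith
  set C : ℝ := (2 : ℝ) ^ N * (ε N + 1 / 17) + (∑ m ∈ Finset.range N, (2 : ℝ) ^ m * ε m) + 1 with hC
  have hsumnn : (0 : ℝ) ≤ ∑ m ∈ Finset.range N, (2 : ℝ) ^ m * ε m :=
    Finset.sum_nonneg fun m _ => mul_nonneg (by positivity) (hεnn m)
  have hCpos : 0 < C := by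
    have h1 : (0 : ℝ) ≤ (2 : ℝ) ^ N * (ε N + 1 / 17) := by
      have := hεnn N; positivity
    rw [hC]; linarith
  refine ⟨C, hCpos, fun n => ?_⟩
  have hz : ((2 : ℝ) ^ (-(n : ℤ))) = ((2 : ℝ) ^ n)⁻¹ := by
    rw [zpow_neg, zpow_natCast]
  rw [hz]
  have hpn : (0 : ℝ) < (2 : ℝ) ^ n := by positivity
  rw [show C * ((2 : ℝ) ^ n)⁻¹ = C / (2 : ℝ) ^ n by ring, le_div_iff₀ hpn]
  -- goal: ε n * 2 ^ n ≤ C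
  rcases le_or_gt N n with h | h
  · obtain ⟨k, rfl⟩ : ∃ k, n = N + k := ⟨n - N, by omega⟩
    have h1 := hmain' k
    have h2 : (2 : ℝ) ^ (N + k) = (2 : ℝ) ^ N * (2 : ℝ) ^ k := pow_add 2 N k
    have h3 : (0 : ℝ) < (2 : ℝ) ^ N := by positivity
    have h4 : ε (N + k) * (2 : ℝ) ^ (N + k) ≤ (2 : ℝ) ^ N * (ε N + 1 / 17) := by
      rw [h2]
      calc ε (N + k) * ((2 : ℝ) ^ N * (2 : ℝ) ^ k)
          = (2 : ℝ) ^ N * ((2 : ℝ) ^ k * ε (N + k)) := by ring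
        _ ≤ (2 : ℝ) ^ N * (ε N + 1 / 17) := mul_le_mul_of_nonneg_left h1 h3.le
    rw [hC]; linarith
  · have h1 : (2 : ℝ) ^ n * ε n ≤ ∑ m ∈ Finset.range N, (2 : ℝ) ^ m * ε m := by
      refine Finset.single_le_sum (f := fun m => (2 : ℝ) ^ m * ε m)
        (fun m _ => mul_nonneg (by positivity) (hεnn m)) (Finset.mem_range.mpr h)
    have h2 : (0 : ℝ) ≤ (2 : ℝ) ^ N * (ε N + 1 / 17) := by
      have := hεnn N; positivity
    rw [hC]; nlinarith
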